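/- Let H be a finite hypergraph with e-index k, minimum unified degree δ*(H), and ∂(H) included edges of cardinality at least 2. Then the largest eigenvalue λ₁(H) of U(H) satisfies λ₁(H) ≥ δ*(H) − ∂(H)/k. -/

import Mathlib

variable {V : Type} [Fintype V] [DecidableEq V]

/-- A finite hypergraph: a finite vertex set and a multiset of nonempty edges. -/
structure UHypergraph (V : Type) [Fintype V] [DecidableEq V] where
  verts : Finset V
  edges : Multiset (Finset V)
  edges_sub : ∀ e ∈ edges, e ⊆ verts
  edges_nonempty : ∀ e ∈ edges, e.Nonempty

open Classical in
/-- `IH H` is `I(H)`: all parts of 2-partitions of edges plus all singletons of `V(H)`. -/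
noncomputable def IH (H : UHypergraph V) : Finset (Finset V) :=
  Finset.univ.filter fun S =>
    (S.Nonempty ∧ ∃ e ∈ H.edges, S ⊂ e) ∨ ∃ v ∈ H.verts, S = {v}

/-- The unified matrix of a hypergraph, indexed by `I(H)`. -/
noncomputable def U (H : UHypergraph V) : Matrix ↥(IH H) ↥(IH H) ℝ := fun S T =>
  if (S : Finset V) = (T : Finset V) then
    (if (S : Finset V).card = 1 then (H.edges.count (S : Finset V) : ℝ) else 0)
  else if Disjoint (S : Finset V) (T : Finset V) then
    (H.edges.count ((S : Finset V) ∪ (T : Finset V)) : ℝ)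
  else 0

/-- Degree of a vertex: number of edges (with multiplicity) containing it. -/
def deg (H : UHypergraph V) (v : V) : ℕ := (H.edges.filter (fun e => v ∈ e)).card

/-- Unified degree of a set `S`: number of edges (with multiplicity) containing `S`. -/
def udeg (H : UHypergraph V) (S : Finset V) : ℕ := (H.edges.filter (fun e => S ⊆ e)).card

/-- `incl H` = ∂(H): number of edges of cardinality ≥ 2 properly contained in another edge. -/
noncomputable def incl (H : UHypergraph V) : ℕ :=
  Multiset.card (H.edges.filter (fun e => 2 ≤ e.card ∧ ∃ e' ∈ H.edges, e ⊂ e'))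

/-- A hypergraph is simple if it has no multiple edges and no loops. -/
def Simple (H : UHypergraph V) : Prop :=
  H.edges.Nodup ∧ ∀ e ∈ H.edges, 2 ≤ e.card

/-- `tau S` = τ(S): the set of unordered 2-partitions of `S`. -/
def tau (S : Finset V) : Finset (Finset (Finset V)) :=
  (S.powerset.filter fun A => A.Nonempty ∧ A ⊂ S).image fun A => {A, S \ A}




lemma card_filter_real {α : Type*} (m : Multiset α) (p : α → Prop) [DecidablePred p] :
    (((m.filter p).card : ℕ) : ℝ) = (m.map fun e => if p e then (1:ℝ) else 0).sum := by
  induction m using Multiset.induction_on with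
  | empty => simp
  | cons a s ih => by_cases h : p a <;> simp [h, ih, add_comm]

lemma count_real {α : Type*} [DecidableEq α] (m : Multiset α) (a : α) :
    ((m.count a : ℕ) : ℝ) = (m.map fun e => if e = a then (1:ℝ) else 0).sum := by
  rw [Multiset.count_eq_card_filter_eq, card_filter_real]
  congr 1; apply Multiset.map_congr rfl; intro e _; simp [eq_comm]

lemma sum_map_swap {ι α : Type*} (s : Finset ι) (m : Multiset α) (f : ι → α → ℝ) :
    ∑ i ∈ s, (m.map (f i)).sum = (m.map fun e => ∑ i ∈ s, f i e).sum := by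
  induction m using Multiset.induction_on with
  | empty => simp
  | cons a t ih => simp [Finset.sum_add_distrib, ih]

lemma sum_map_sub {α : Type*} (m : Multiset α) (f g : α → ℝ) :
    (m.map fun e => f e - g e).sum = (m.map f).sum - (m.map g).sum := by
  induction m using Multiset.induction_on with
  | empty => simp
  | cons a t ih => simp [ih]; ring

open Matrix in
lemma rayleigh_aux {n : Type*} [Fintype n] [DecidableEq n] (A : Matrix n n ℝ)
    (hA : A.IsHermitian) (i₀ : n) (hmax : ∀ i, hA.eigenvalues i ≤ hA.eigenvalues i₀)
    (x : n → ℝ) : x ⬝ᵥ (A *ᵥ x) ≤ hA.eigenvalues i₀ * (x ⬝ᵥ x) := by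
  set B := (hA.eigenvectorUnitary : Matrix n n ℝ) with hB
  set y := star B *ᵥ x with hy
  have hBB : B * star B = 1 := (Matrix.mem_unitaryGroup_iff).mp hA.eigenvectorUnitary.2
  have hvB : x ᵥ* B = y := by
    ext i; simp [hy, Matrix.vecMul, Matrix.mulVec, dotProduct, Matrix.star_apply, mul_comm]
  have hvSB : y ᵥ* star B = x := by
    have h1 : y ᵥ* star B = B *ᵥ y := by
      ext j; simp [Matrix.vecMul, Matrix.mulVec, dotProduct, Matrix.star_apply, mul_comm]
    rw [h1, hy, Matrix.mulVec_mulVec, hBB, Matrix.one_mulVec]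
  have hxx : x ⬝ᵥ x = y ⬝ᵥ y := by
    have h2 : x ⬝ᵥ x = (y ᵥ* star B) ⬝ᵥ x := by rw [hvSB]
    rw [h2, ← dotProduct_mulVec, ← hy]
  have hxAx : x ⬝ᵥ (A *ᵥ x) = ∑ i, hA.eigenvalues i * (y i * y i) := by
    conv_lhs => rw [hA.spectral_theorem, Unitary.conjStarAlgAut_apply]
    rw [← Matrix.mulVec_mulVec, ← Matrix.mulVec_mulVec, ← hy, dotProduct_mulVec, hvB,
      dotProduct]
    refine Finset.sum_congr rfl fun i _ => ?_
    rw [Matrix.mulVec_diagonal]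
    simp only [Function.comp_apply, RCLike.ofReal_real_eq_id, id_eq]
    ring
  rw [hxAx, hxx, dotProduct, Finset.mul_sum]
  exact Finset.sum_le_sum fun i _ => by
    have := mul_le_mul_of_nonneg_right (hmax i) (mul_self_nonneg (y i)); linarith

open Classical in
noncomputable def gfun (H : UHypergraph V) (S T e : Finset V) : ℝ :=
  if S = T then (if S.card = 1 then (if e = S then 1 else 0) else 0)
  else if Disjoint S T then (if e = S ∪ T then 1 else 0) else 0

open Classical in
noncomputable def Gmat (H : UHypergraph V) (S T : Finset V) : ℝ :=
  if S = T then (if S.card = 1 then (H.edges.count S : ℝ) else 0)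
  else if Disjoint S T then (H.edges.count (S ∪ T) : ℝ) else 0

lemma Gmat_eq_sum (H : UHypergraph V) (S T : Finset V) :
    Gmat H S T = (H.edges.map (gfun H S T)).sum := by
  classical
  unfold Gmat gfun
  split_ifs <;> simp [count_real]

lemma mem_IH {H : UHypergraph V} {S : Finset V} :
    S ∈ IH H ↔ (S.Nonempty ∧ ∃ e ∈ H.edges, S ⊂ e) ∨ ∃ v ∈ H.verts, S = {v} := by
  classical
  simp [IH]

lemma nonempty_of_mem_IH {H : UHypergraph V} {S : Finset V} (h : S ∈ IH H) : S.Nonempty := by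
  rcases mem_IH.mp h with ⟨h1, _⟩ | ⟨v, _, rfl⟩
  · exact h1
  · exact ⟨v, Finset.mem_singleton_self v⟩

lemma row_sum (H : UHypergraph V) {e S : Finset V} (he : e ∈ H.edges) (hS : S ∈ IH H) :
    ∑ T ∈ IH H, gfun H S T e =
      (if S.card = 1 ∧ e = S then (1:ℝ) else 0) + (if S ⊂ e then 1 else 0) := by
  classical
  rw [← Finset.add_sum_erase _ _ hS]
  have hSne := nonempty_of_mem_IH hS
  congr 1
  · have hd : gfun H S S e = if S.card = 1 then (if e = S then (1:ℝ) else 0) else 0 :=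
      if_pos rfl
    rw [hd]
    by_cases h1 : S.card = 1
    · by_cases h2 : e = S
      · rw [if_pos h1, if_pos h2, if_pos ⟨h1, h2⟩]
      · rw [if_pos h1, if_neg h2, if_neg (fun h : S.card = 1 ∧ e = S => h2 h.2)]
    · rw [if_neg h1, if_neg (fun h : S.card = 1 ∧ e = S => h1 h.1)]
  · have hpt : ∀ T ∈ (IH H).erase S, gfun H S T e =
        if T = e \ S ∧ S ⊂ e then (1:ℝ) else 0 := by
      intro T hT
      obtain ⟨hTS, hTIH⟩ := Finset.mem_erase.mp hT
      have hTne := nonempty_of_mem_IH hTIH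
      unfold gfun
      rw [if_neg (Ne.symm hTS)]
      have hiff : (Disjoint S T ∧ e = S ∪ T) ↔ (T = e \ S ∧ S ⊂ e) := by
        constructor
        · rintro ⟨hdisj, rfl⟩
          constructor
          · apply Finset.Subset.antisymm
            · intro x hx
              exact Finset.mem_sdiff.mpr ⟨Finset.mem_union_right _ hx,
                fun hxS => (Finset.disjoint_left.mp hdisj hxS) hx⟩
            · intro x hx
              rcases Finset.mem_sdiff.mp hx with ⟨hxe, hxS⟩
              rcases Finset.mem_union.mp hxe with h | h
              · exact absurd h hxS
              · exact h
          · refine ⟨Finset.subset_union_left, fun hEq => ?_⟩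
            obtain ⟨x, hx⟩ := hTne
            have hxS : x ∈ S := hEq (Finset.mem_union_right _ hx)
            exact (Finset.disjoint_left.mp hdisj hxS) hx
        · rintro ⟨rfl, hlt⟩
          exact ⟨Finset.disjoint_sdiff, (Finset.union_sdiff_of_subset hlt.subset).symm⟩
      by_cases hd : Disjoint S T
      · by_cases heq : e = S ∪ T
        · rw [if_pos hd, if_pos heq, if_pos (hiff.mp ⟨hd, heq⟩)]
        · rw [if_pos hd, if_neg heq, if_neg (fun h => heq (hiff.mpr h).2)]
      · rw [if_neg hd, if_neg (fun h => hd (hiff.mpr h).1)]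
    rw [Finset.sum_congr rfl hpt]
    by_cases hlt : S ⊂ e
    · have hmem : e \ S ∈ (IH H).erase S := by
        refine Finset.mem_erase.mpr ⟨?_, ?_⟩
        · intro h
          obtain ⟨x, hx⟩ := hSne
          have : x ∈ e \ S := h.symm ▸ hx
          exact (Finset.mem_sdiff.mp this).2 hx
        · refine mem_IH.mpr (Or.inl ⟨?_, e, he, ?_⟩)
          · rw [Finset.sdiff_nonempty]
            exact fun hsub => hlt.ne (Finset.Subset.antisymm hlt.subset hsub)
          · refine ⟨Finset.sdiff_subset, fun hsub => ?_⟩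
            obtain ⟨x, hx⟩ := hSne
            have : x ∈ e \ S := hsub (hlt.subset hx)
            exact (Finset.mem_sdiff.mp this).2 hx
      simp only [hlt, and_true, if_true]
      rw [Finset.sum_ite_eq' ((IH H).erase S) (e \ S) (fun _ => (1:ℝ)), if_pos hmem]
    · simp [hlt]

lemma col_sum (H : UHypergraph V) {e : Finset V} (he : e ∈ H.edges) :
    ∑ S ∈ IH H, ((if S.card = 1 ∧ e = S then (1:ℝ) else 0) + (if S ⊂ e then 1 else 0)) =
      (∑ S ∈ IH H, if S ⊆ e then (1:ℝ) else 0) -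
        (if 2 ≤ e.card ∧ ∃ e' ∈ H.edges, e ⊂ e' then 1 else 0) := by
  classical
  rw [Finset.sum_add_distrib]
  have h1 : ∑ S ∈ IH H, (if S.card = 1 ∧ e = S then (1:ℝ) else 0) =
      if e ∈ IH H ∧ e.card = 1 then 1 else 0 := by
    rw [show (fun S => if S.card = 1 ∧ e = S then (1:ℝ) else 0) =
        (fun S => if S = e then (if S.card = 1 then (1:ℝ) else 0) else 0) from ?_]
    · rw [Finset.sum_ite_eq' (IH H) e (fun S => if S.card = 1 then (1:ℝ) else 0)]
      split_ifs <;> simp_all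
    · funext S
      by_cases hse : S = e
      · subst hse; simp
      · have hns : ¬ (S.card = 1 ∧ e = S) := fun h => hse h.2.symm
        simp [hse, hns]
  have h2 : ∑ S ∈ IH H, (if S ⊆ e then (1:ℝ) else 0) =
      (∑ S ∈ IH H, if S ⊂ e then (1:ℝ) else 0) + (if e ∈ IH H then 1 else 0) := by
    have : ∀ S ∈ IH H, (if S ⊆ e then (1:ℝ) else 0) =
        (if S ⊂ e then (1:ℝ) else 0) + (if S = e then 1 else 0) := by
      intro S _
      by_cases h : S = e
      · subst h; simp [ssubset_irrefl]
      · by_cases h2 : S ⊆ e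
        · simp [h2, h, Finset.ssubset_iff_subset_ne.mpr ⟨h2, h⟩]
        · have h3 : ¬ S ⊂ e := fun hlt => h2 hlt.subset
          simp [h2, h, h3]
    rw [Finset.sum_congr rfl this, Finset.sum_add_distrib,
      Finset.sum_ite_eq' (IH H) e (fun _ => (1:ℝ))]
  rw [h1, h2]
  have hne : e.Nonempty := H.edges_nonempty e he
  have hcard : 1 ≤ e.card := Finset.card_pos.mpr hne
  by_cases hc1 : e.card = 1
  · have heIH : e ∈ IH H := by
      obtain ⟨v, hv⟩ := Finset.card_eq_one.mp hc1
      exact mem_IH.mpr (Or.inr ⟨v, H.edges_sub e he (hv ▸ Finset.mem_singleton_self v),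
        hv⟩)
    have hno : ¬ (2 ≤ e.card ∧ ∃ e' ∈ H.edges, e ⊂ e') := fun h => by omega
    rw [if_pos ⟨heIH, hc1⟩, if_pos heIH, if_neg hno]
    ring
  · have hc2 : 2 ≤ e.card := by omega
    have heq : e ∈ IH H ↔ ∃ e' ∈ H.edges, e ⊂ e' := by
      rw [mem_IH]
      constructor
      · rintro (⟨_, h⟩ | ⟨v, _, rfl⟩)
        · exact h
        · simp at hc1
      · exact fun h => Or.inl ⟨hne, h⟩
    by_cases hex : ∃ e' ∈ H.edges, e ⊂ e'
    · rw [if_neg (fun h : e ∈ IH H ∧ e.card = 1 => hc1 h.2), if_pos (heq.mpr hex),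
        if_pos ⟨hc2, hex⟩]
      ring
    · rw [if_neg (fun h : e ∈ IH H ∧ e.card = 1 => hc1 h.2),
        if_neg (fun h => hex (heq.mp h)), if_neg (fun h => hex h.2)]
      ring

theorem lambda_one_ge_min_unified_degree (H : UHypergraph V) (hU : (U H).IsHermitian)
    (i₀ : ↥(IH H)) (hmax : ∀ i, hU.eigenvalues i ≤ hU.eigenvalues i₀) :
    (((IH H).inf' ⟨i₀.1, i₀.2⟩ (udeg H) : ℕ) : ℝ) - (incl H : ℝ) / ((IH H).card : ℝ) ≤
      hU.eigenvalues i₀ := by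
  classical
  set k : ℕ := (IH H).card with hk
  have hne : (IH H).Nonempty := ⟨i₀.1, i₀.2⟩
  have hkpos : 0 < (k : ℝ) := by
    exact_mod_cast Finset.card_pos.mpr hne
  set δ : ℕ := (IH H).inf' hne (udeg H) with hδ
  -- Rayleigh with all-ones vector
  have hray := rayleigh_aux (U H) hU i₀ hmax (fun _ => 1)
  have hxx : dotProduct (fun (_ : ↥(IH H)) => (1:ℝ)) (fun _ => 1) = (k : ℝ) := by
    simp [dotProduct, hk, Fintype.card_coe]
  have hUG : ∀ S T : ↥(IH H), U H S T = Gmat H S.1 T.1 := fun S T => rfl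
  have hxUx : dotProduct (fun (_ : ↥(IH H)) => (1:ℝ))
      (Matrix.mulVec (U H) fun _ => 1) = ∑ S ∈ IH H, ∑ T ∈ IH H, Gmat H S T := by
    simp only [dotProduct, Matrix.mulVec, one_mul, mul_one]
    calc ∑ S : ↥(IH H), ∑ T : ↥(IH H), U H S T
        = ∑ S : ↥(IH H), ∑ T ∈ IH H, Gmat H S.1 T := by
          refine Finset.sum_congr rfl fun S _ => ?_
          rw [← Finset.sum_coe_sort (IH H) (fun T => Gmat H S.1 T)]
          exact Finset.sum_congr rfl fun T _ => hUG S T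
      _ = ∑ S ∈ IH H, ∑ T ∈ IH H, Gmat H S T :=
          Finset.sum_coe_sort (IH H) (fun S => ∑ T ∈ IH H, Gmat H S T)
  -- compute the total sum
  have htot : ∑ S ∈ IH H, ∑ T ∈ IH H, Gmat H S T =
      (∑ S ∈ IH H, (udeg H S : ℝ)) - (incl H : ℝ) := by
    have step1 : ∑ S ∈ IH H, ∑ T ∈ IH H, Gmat H S T =
        (H.edges.map fun e => ∑ S ∈ IH H, ∑ T ∈ IH H, gfun H S T e).sum := by
      rw [← sum_map_swap (IH H) H.edges (fun S e => ∑ T ∈ IH H, gfun H S T e)]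
      refine Finset.sum_congr rfl fun S _ => ?_
      rw [← sum_map_swap (IH H) H.edges (fun T e => gfun H S T e)]
      exact Finset.sum_congr rfl fun T _ => Gmat_eq_sum H S T
    rw [step1]
    have step2 : (H.edges.map fun e => ∑ S ∈ IH H, ∑ T ∈ IH H, gfun H S T e).sum =
        (H.edges.map fun e => (∑ S ∈ IH H, if S ⊆ e then (1:ℝ) else 0) -
          (if 2 ≤ e.card ∧ ∃ e' ∈ H.edges, e ⊂ e' then 1 else 0)).sum := by
      congr 1
      refine Multiset.map_congr rfl fun e he => ?_
      rw [← col_sum H he]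
      refine Finset.sum_congr rfl fun S hS => row_sum H he hS
    rw [step2, sum_map_sub]
    congr 1
    · rw [← sum_map_swap (IH H) H.edges (fun S e => if S ⊆ e then (1:ℝ) else 0)]
      refine Finset.sum_congr rfl fun S _ => ?_
      rw [udeg, card_filter_real]
    · rw [incl, card_filter_real]
  -- min degree bound
  have hmin : (k : ℝ) * (δ : ℝ) ≤ ∑ S ∈ IH H, (udeg H S : ℝ) := by
    calc (k : ℝ) * (δ : ℝ) = ∑ _S ∈ IH H, (δ : ℝ) := by
          rw [Finset.sum_const, hk, nsmul_eq_mul]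
      _ ≤ ∑ S ∈ IH H, (udeg H S : ℝ) := by
          refine Finset.sum_le_sum fun S hS => ?_
          exact_mod_cast Finset.inf'_le (udeg H) hS
  have key : (k : ℝ) * (δ : ℝ) - (incl H : ℝ) ≤ hU.eigenvalues i₀ * k := by
    rw [hxUx, hxx, htot] at hray
    linarith
  rw [← mul_le_mul_iff_of_pos_right hkpos]
  have hexp : ((δ:ℝ) - (incl H : ℝ) / (k:ℝ)) * (k:ℝ) = (k:ℝ) * (δ:ℝ) - (incl H : ℝ) := by
    field_simp
  rw [hexp]
  exact key
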